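/- Let G = (V, E) be a finite simple graph whose vertex set is partitioned into nonempty clusters V₁,…,V_P, with P available colors, and let λ > P be a real penalty coefficient. Consider the Sel-Col QUBO objective F_λ(x,y) = Σ_{k=1}^P y_k + λ Σ_{p=1}^P (1 − Σ_{i∈V_p} Σ_{k=1}^P x_{ik})² + λ Σ_{{i,j}∈E} Σ_{k=1}^P x_{ik} x_{jk} + λ Σ_{i∈V} Σ_{k=1}^P (x_{ik} − y_k) x_{ik} over binary x and y. Then every minimizer of F_λ over binary (x,y) satisfies all Sel-Col constraints, and the minimum of F_λ over binary (x,y) equals the optimal value of the Sel-Col integer program (the minimum of Σ_{k=1}^P y_k over binary (x,y) satisfying the Sel-Col constraints); i.e., for λ > P the QUBO formulation of Sel-Col is exact. -/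

import Mathlib

/-- The Sel-Col unit penalty. -/
noncomputable def selColPen {V : Type*} [Fintype V] [DecidableEq V] (G : SimpleGraph V)
    [DecidableRel G.Adj] {P : ℕ} (Vp : Fin P → Finset V)
    (x : V → Fin P → ℝ) (y : Fin P → ℝ) : ℝ :=
  (∑ p, (1 - ∑ i ∈ Vp p, ∑ k, x i k) ^ 2)
    + (∑ e ∈ G.edgeFinset, ∑ k,
        Sym2.lift ⟨fun i j => x i k * x j k, fun i j => mul_comm (x i k) (x j k)⟩ e)
    + ∑ i, ∑ k, (x i k - y k) * x i k

/-- The Sel-Col constraints. -/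
def selColFeasible {V : Type*} (G : SimpleGraph V) {P : ℕ} (Vp : Fin P → Finset V)
    (x : V → Fin P → ℝ) (y : Fin P → ℝ) : Prop :=
  (∀ p, ∑ i ∈ Vp p, ∑ k, x i k = 1) ∧
    (∀ i j, G.Adj i j → ∀ k, x i k + x j k ≤ 1) ∧
    (∀ i k, x i k ≤ y k)

-- int-valued sums
lemma sum_int_valued {α : Type*} (s : Finset α) (f : α → ℝ)
    (hf : ∀ a ∈ s, ∃ n : ℤ, f a = n) : ∃ n : ℤ, ∑ a ∈ s, f a = n := by
  classical
  induction s using Finset.induction_on with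
  | empty => exact ⟨0, by simp⟩
  | insert a s ha ih =>
    obtain ⟨n, hn⟩ := hf _ (Finset.mem_insert_self _ _)
    obtain ⟨m, hm⟩ := ih (fun a has => hf a (Finset.mem_insert_of_mem has))
    exact ⟨n + m, by rw [Finset.sum_insert ha, hn, hm]; push_cast; ring⟩

lemma one_le_sq_of_int_ne_one {s : ℝ} (h : ∃ n : ℤ, s = n) (hs : s ≠ 1) :
    1 ≤ (1 - s) ^ 2 := by
  obtain ⟨n, rfl⟩ := h
  have hn : (1 : ℤ) - n ≠ 0 := by
    intro h'; apply hs
    have : n = 1 := by omega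
    rw [this]; norm_num
  have := Int.one_le_abs hn
  have h2 : (1 : ℤ) ≤ (1 - n) ^ 2 := by nlinarith [sq_abs (1 - n)]
  calc (1:ℝ) = ((1:ℤ):ℝ) := by norm_num
    _ ≤ (((1-n)^2 : ℤ) : ℝ) := by exact_mod_cast h2
    _ = (1 - (n:ℝ))^2 := by push_cast; ring


section helpers

variable {V : Type*} [Fintype V] [DecidableEq V] (G : SimpleGraph V) [DecidableRel G.Adj]
  {P : ℕ} (Vp : Fin P → Finset V) (x : V → Fin P → ℝ) (y : Fin P → ℝ)

lemma edge_sum_nonneg (hx : ∀ i k, x i k = 0 ∨ x i k = 1) :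
    ∀ e ∈ G.edgeFinset, (0:ℝ) ≤ ∑ k,
      Sym2.lift ⟨fun i j => x i k * x j k, fun i j => mul_comm (x i k) (x j k)⟩ e := by
  intro e he
  refine Finset.sum_nonneg fun k _ => ?_
  induction e using Sym2.ind with
  | _ i j =>
    simp only [Sym2.lift_mk]
    rcases hx i k with h | h <;> rcases hx j k with h' | h' <;> simp [h, h']

lemma cterm_nonneg (hx : ∀ i k, x i k = 0 ∨ x i k = 1) (hy : ∀ k, y k = 0 ∨ y k = 1) :
    ∀ i k, (0:ℝ) ≤ (x i k - y k) * x i k := by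
  intro i k
  rcases hx i k with h | h <;> rcases hy k with h' | h' <;> simp [h, h']

lemma c_sum_nonneg (hx : ∀ i k, x i k = 0 ∨ x i k = 1) (hy : ∀ k, y k = 0 ∨ y k = 1) :
    (0:ℝ) ≤ ∑ i, ∑ k, (x i k - y k) * x i k :=
  Finset.sum_nonneg fun i _ => Finset.sum_nonneg fun k _ => cterm_nonneg x y hx hy i k

lemma selColPen_nonneg (hx : ∀ i k, x i k = 0 ∨ x i k = 1) (hy : ∀ k, y k = 0 ∨ y k = 1) :
    0 ≤ selColPen G Vp x y := by
  unfold selColPen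
  have h1 : (0:ℝ) ≤ ∑ p, (1 - ∑ i ∈ Vp p, ∑ k, x i k) ^ 2 :=
    Finset.sum_nonneg fun p _ => sq_nonneg _
  have h2 := Finset.sum_nonneg (edge_sum_nonneg G x hx)
  have h3 := c_sum_nonneg x y hx hy
  linarith

lemma selColPen_eq_zero (hx : ∀ i k, x i k = 0 ∨ x i k = 1) (hy : ∀ k, y k = 0 ∨ y k = 1)
    (hf : selColFeasible G Vp x y) :
    selColPen G Vp x y = 0 := by
  obtain ⟨h1, h2, h3⟩ := hf
  unfold selColPen
  have e1 : ∑ p, (1 - ∑ i ∈ Vp p, ∑ k, x i k) ^ 2 = 0 := by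
    refine Finset.sum_eq_zero fun p _ => ?_
    rw [h1 p]; ring
  have e2 : (∑ e ∈ G.edgeFinset, ∑ k,
      Sym2.lift ⟨fun i j => x i k * x j k, fun i j => mul_comm (x i k) (x j k)⟩ e) = 0 := by
    refine Finset.sum_eq_zero fun e he => Finset.sum_eq_zero fun k _ => ?_
    induction e using Sym2.ind with
    | _ i j =>
      rw [SimpleGraph.mem_edgeFinset, SimpleGraph.mem_edgeSet] at he
      have := h2 i j he k
      simp only [Sym2.lift_mk]
      rcases hx i k with h | h
      · simp [h]
      · rcases hx j k with h' | h'
        · simp [h']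
        · exfalso; rw [h, h'] at this; norm_num at this
  have e3 : (∑ i, ∑ k, (x i k - y k) * x i k) = 0 := by
    refine Finset.sum_eq_zero fun i _ => Finset.sum_eq_zero fun k _ => ?_
    have := h3 i k
    rcases hx i k with h | h
    · simp [h]
    · rcases hy k with h' | h'
      · exfalso; rw [h, h'] at this; norm_num at this
      · simp [h, h']
  rw [e1, e2, e3]; ring

lemma one_le_selColPen (hx : ∀ i k, x i k = 0 ∨ x i k = 1) (hy : ∀ k, y k = 0 ∨ y k = 1)
    (hinf : ¬ selColFeasible G Vp x y) :
    1 ≤ selColPen G Vp x y := by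
  have hA : (0:ℝ) ≤ ∑ p, (1 - ∑ i ∈ Vp p, ∑ k, x i k) ^ 2 :=
    Finset.sum_nonneg fun p _ => sq_nonneg _
  have hB := Finset.sum_nonneg (edge_sum_nonneg G x hx)
  have hC := c_sum_nonneg x y hx hy
  unfold selColPen
  unfold selColFeasible at hinf
  push_neg at hinf
  by_cases h1 : ∀ p, ∑ i ∈ Vp p, ∑ k, x i k = 1
  · by_cases h2 : ∀ i j, G.Adj i j → ∀ k, x i k + x j k ≤ 1
    · -- third constraint violated
      obtain ⟨i, k, hik⟩ := by
        have := hinf h1 h2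
        exact this
      have hx1 : x i k = 1 := by
        rcases hx i k with h | h
        · rcases hy k with h' | h' <;> rw [h, h'] at hik <;> norm_num at hik
        · exact h
      have hy0 : y k = 0 := by
        rcases hy k with h' | h'
        · exact h'
        · rw [hx1, h'] at hik; norm_num at hik
      have hterm : (1:ℝ) ≤ (x i k - y k) * x i k := by rw [hx1, hy0]; norm_num
      have hin : (1:ℝ) ≤ ∑ k', (x i k' - y k') * x i k' := by
        calc (1:ℝ) ≤ (x i k - y k) * x i k := hterm
          _ ≤ ∑ k', (x i k' - y k') * x i k' :=
            Finset.single_le_sum (fun k' _ => cterm_nonneg x y hx hy i k') (Finset.mem_univ k)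
      have hCC : (1:ℝ) ≤ ∑ i, ∑ k, (x i k - y k) * x i k := by
        calc (1:ℝ) ≤ ∑ k', (x i k' - y k') * x i k' := hin
          _ ≤ _ := Finset.single_le_sum
            (fun i' _ => Finset.sum_nonneg fun k' _ => cterm_nonneg x y hx hy i' k')
            (Finset.mem_univ i)
      linarith
    · -- edge constraint violated
      push_neg at h2
      obtain ⟨i, j, hadj, k, hk⟩ := h2
      have hx1 : x i k = 1 := by
        rcases hx i k with h | h
        · rcases hx j k with h' | h' <;> rw [h, h'] at hk <;> norm_num at hk
        · exact h
      have hx2 : x j k = 1 := by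
        rcases hx j k with h | h
        · rw [hx1, h] at hk; norm_num at hk
        · exact h
      have hmem : s(i, j) ∈ G.edgeFinset := by
        rw [SimpleGraph.mem_edgeFinset, SimpleGraph.mem_edgeSet]; exact hadj
      have hBB : (1:ℝ) ≤ ∑ e ∈ G.edgeFinset, ∑ k,
          Sym2.lift ⟨fun a b => x a k * x b k, fun a b => mul_comm (x a k) (x b k)⟩ e := by
        refine le_trans ?_ (Finset.single_le_sum (edge_sum_nonneg G x hx) hmem)
        simp only [Sym2.lift_mk]
        calc (1:ℝ) = x i k * x j k := by rw [hx1, hx2]; norm_num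
          _ ≤ ∑ k', x i k' * x j k' := by
            refine Finset.single_le_sum (f := fun k' => x i k' * x j k')
              (fun k' _ => ?_) (Finset.mem_univ k)
            rcases hx i k' with h | h <;> rcases hx j k' with h' | h' <;> simp [h, h']
      linarith
  · -- cluster constraint violated
    push_neg at h1
    obtain ⟨p, hp⟩ := h1
    have hint : ∃ n : ℤ, ∑ i ∈ Vp p, ∑ k, x i k = n := by
      refine sum_int_valued _ _ fun i _ => sum_int_valued _ _ fun k _ => ?_
      rcases hx i k with h | h
      · exact ⟨0, by rw [h]; norm_num⟩
      · exact ⟨1, by rw [h]; norm_num⟩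
    have hterm := one_le_sq_of_int_ne_one hint hp
    have hAA : (1:ℝ) ≤ ∑ p, (1 - ∑ i ∈ Vp p, ∑ k, x i k) ^ 2 :=
      le_trans hterm (Finset.single_le_sum (f := fun p' => (1 - ∑ i ∈ Vp p', ∑ k, x i k) ^ 2) (fun p' _ => sq_nonneg _) (Finset.mem_univ p))
    linarith

end helpers


section mainaux

variable {V : Type*} [Fintype V] [DecidableEq V] (G : SimpleGraph V) [DecidableRel G.Adj]
  {P : ℕ} (Vp : Fin P → Finset V)

lemma exists_feasible_point (hdisj : ∀ p q, p ≠ q → Disjoint (Vp p) (Vp q))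
    (hne : ∀ p, (Vp p).Nonempty) :
    ∃ (x : V → Fin P → ℝ) (y : Fin P → ℝ),
      (∀ i k, x i k = 0 ∨ x i k = 1) ∧ (∀ k, y k = 0 ∨ y k = 1) ∧
      selColFeasible G Vp x y ∧
      (∑ k, y k) = P := by
  choose rep hrep using hne
  refine ⟨fun i k => if i = rep k then 1 else 0, fun _ => 1, ?_, fun _ => Or.inr rfl,
    ⟨?_, ?_, ?_⟩, by simp⟩
  · intro i k; dsimp only; split <;> simp
  · intro p
    have hinner : ∀ i ∈ Vp p,
        (∑ k, if i = rep k then (1:ℝ) else 0) = if i = rep p then 1 else 0 := by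
      intro i hi
      refine Finset.sum_eq_single_of_mem p (Finset.mem_univ p) ?_
      intro k _ hk
      rw [if_neg]
      intro h
      exact Finset.disjoint_left.mp (hdisj p k (Ne.symm hk)) hi (h ▸ hrep k)
    rw [Finset.sum_congr rfl hinner]
    refine Finset.sum_eq_single_of_mem (rep p) (hrep p) ?_ |>.trans (if_pos rfl)
    intro i _ hi
    exact if_neg hi
  · intro i j hadj k
    dsimp only
    by_cases h1 : i = rep k <;> by_cases h2 : j = rep k <;> simp [h1, h2]
    exact absurd (h1.trans h2.symm) hadj.ne
  · intro i k; dsimp only; split <;> norm_num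

end mainaux

/-- For λ > P, every binary minimizer of the Sel-Col QUBO objective
`F_λ(x,y) = Σ_k y_k + λ·Pen(x,y)` satisfies all Sel-Col constraints, and the minimum of
`F_λ` over binary (x, y) equals the optimal value of the Sel-Col integer program; i.e.,
the QUBO formulation of Sel-Col is exact. -/
theorem selcol_qubo_exact {V : Type*} [Fintype V] [DecidableEq V]
    (G : SimpleGraph V) [DecidableRel G.Adj] {P : ℕ} (Vp : Fin P → Finset V)
    (hdisj : ∀ p q, p ≠ q → Disjoint (Vp p) (Vp q))
    (hcover : ∀ v : V, ∃ p, v ∈ Vp p)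
    (hne : ∀ p, (Vp p).Nonempty)
    (lam : ℝ) (hlam : (P : ℝ) < lam) :
    (∀ (x : V → Fin P → ℝ) (y : Fin P → ℝ),
      (∀ i k, x i k = 0 ∨ x i k = 1) → (∀ k, y k = 0 ∨ y k = 1) →
      (∀ (x' : V → Fin P → ℝ) (y' : Fin P → ℝ),
        (∀ i k, x' i k = 0 ∨ x' i k = 1) → (∀ k, y' k = 0 ∨ y' k = 1) →
        (∑ k, y k) + lam * selColPen G Vp x y ≤
          (∑ k, y' k) + lam * selColPen G Vp x' y') →
      selColFeasible G Vp x y) ∧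
    sInf {v : ℝ | ∃ (x : V → Fin P → ℝ) (y : Fin P → ℝ),
        (∀ i k, x i k = 0 ∨ x i k = 1) ∧ (∀ k, y k = 0 ∨ y k = 1) ∧
        v = (∑ k, y k) + lam * selColPen G Vp x y} =
      sInf {v : ℝ | ∃ (x : V → Fin P → ℝ) (y : Fin P → ℝ),
        (∀ i k, x i k = 0 ∨ x i k = 1) ∧ (∀ k, y k = 0 ∨ y k = 1) ∧
        selColFeasible G Vp x y ∧ v = ∑ k, y k} := by
  obtain ⟨x₀, y₀, hx₀, hy₀, hfeas₀, hsum₀⟩ := exists_feasible_point G Vp hdisj hne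
  have hpen₀ : selColPen G Vp x₀ y₀ = 0 := selColPen_eq_zero G Vp x₀ y₀ hx₀ hy₀ hfeas₀
  have hlam0 : (0:ℝ) < lam := lt_of_le_of_lt (Nat.cast_nonneg P) hlam
  have hynn : ∀ (y : Fin P → ℝ), (∀ k, y k = 0 ∨ y k = 1) → (0:ℝ) ≤ ∑ k, y k := by
    intro y hy
    refine Finset.sum_nonneg fun k _ => ?_
    rcases hy k with h | h <;> simp [h]
  constructor
  · intro x y hx hy hmin
    by_contra hinf
    have h1 : 1 ≤ selColPen G Vp x y := one_le_selColPen G Vp x y hx hy hinf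
    have h2 := hmin x₀ y₀ hx₀ hy₀
    rw [hpen₀, hsum₀] at h2
    have h3 : lam * 1 ≤ lam * selColPen G Vp x y :=
      mul_le_mul_of_nonneg_left h1 hlam0.le
    have h4 := hynn y hy
    nlinarith
  · set S1 := {v : ℝ | ∃ (x : V → Fin P → ℝ) (y : Fin P → ℝ),
        (∀ i k, x i k = 0 ∨ x i k = 1) ∧ (∀ k, y k = 0 ∨ y k = 1) ∧
        v = (∑ k, y k) + lam * selColPen G Vp x y} with hS1
    set S2 := {v : ℝ | ∃ (x : V → Fin P → ℝ) (y : Fin P → ℝ),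
        (∀ i k, x i k = 0 ∨ x i k = 1) ∧ (∀ k, y k = 0 ∨ y k = 1) ∧
        selColFeasible G Vp x y ∧ v = ∑ k, y k} with hS2
    have hP1 : ((P:ℝ)) ∈ S1 := ⟨x₀, y₀, hx₀, hy₀, by rw [hpen₀, hsum₀]; ring⟩
    have hP2 : ((P:ℝ)) ∈ S2 := ⟨x₀, y₀, hx₀, hy₀, hfeas₀, hsum₀.symm⟩
    have hne1 : S1.Nonempty := ⟨_, hP1⟩
    have hne2 : S2.Nonempty := ⟨_, hP2⟩
    have hbdd1 : BddBelow S1 := by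
      refine ⟨0, fun v hv => ?_⟩
      obtain ⟨x, y, hx, hy, rfl⟩ := hv
      have := selColPen_nonneg G Vp x y hx hy
      have := hynn y hy
      nlinarith
    have hbdd2 : BddBelow S2 := by
      refine ⟨0, fun v hv => ?_⟩
      obtain ⟨x, y, hx, hy, _, rfl⟩ := hv
      exact hynn y hy
    apply le_antisymm
    · refine le_csInf hne2 fun v hv => ?_
      obtain ⟨x, y, hx, hy, hfeas, rfl⟩ := hv
      refine csInf_le hbdd1 ⟨x, y, hx, hy, ?_⟩
      rw [selColPen_eq_zero G Vp x y hx hy hfeas]; ring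
    · refine le_csInf hne1 fun v hv => ?_
      obtain ⟨x, y, hx, hy, rfl⟩ := hv
      by_cases hfeas : selColFeasible G Vp x y
      · have : (∑ k, y k) ∈ S2 := ⟨x, y, hx, hy, hfeas, rfl⟩
        have h := csInf_le hbdd2 this
        rw [selColPen_eq_zero G Vp x y hx hy hfeas]
        linarith
      · have h1 : 1 ≤ selColPen G Vp x y := one_le_selColPen G Vp x y hx hy hfeas
        have h2 : sInf S2 ≤ (P:ℝ) := csInf_le hbdd2 hP2
        have h3 : lam * 1 ≤ lam * selColPen G Vp x y :=
          mul_le_mul_of_nonneg_left h1 hlam0.le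
        have h4 := hynn y hy
        nlinarith
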